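/- For k ∈ {3,4,5}, there is no empty k-circuit containing a face f that shares no edge with the spanning face f_e. -/

import Mathlib

/-- A combinatorial map (connected graph cellularly embedded in an orientable surface),
given by a set of darts `D`, the edge involution `σ` and the rotation `ρ`. -/
structure CombMap where
  D : Type
  fin : Finite D
  σ : Equiv.Perm D
  ρ : Equiv.Perm D
  σ_invol : ∀ d, σ (σ d) = d
  σ_fixfree : ∀ d, σ d ≠ d
  conn : ∀ d d' : D, ∃ g ∈ Subgroup.closure ({σ, ρ} : Set (Equiv.Perm D)), g d = d'

attribute [instance] CombMap.fin

namespace CombMap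

variable (M : CombMap)

/-- The face permutation. -/
def φ : Equiv.Perm M.D := M.ρ * M.σ

def vSetoid : Setoid M.D :=
  ⟨M.ρ.SameCycle, ⟨fun _ => Equiv.Perm.SameCycle.refl _ _,
    Equiv.Perm.SameCycle.symm, Equiv.Perm.SameCycle.trans⟩⟩

def eSetoid : Setoid M.D :=
  ⟨M.σ.SameCycle, ⟨fun _ => Equiv.Perm.SameCycle.refl _ _,
    Equiv.Perm.SameCycle.symm, Equiv.Perm.SameCycle.trans⟩⟩

def fSetoid : Setoid M.D :=
  ⟨M.φ.SameCycle, ⟨fun _ => Equiv.Perm.SameCycle.refl _ _,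
    Equiv.Perm.SameCycle.symm, Equiv.Perm.SameCycle.trans⟩⟩

/-- Vertices are orbits of `ρ`. -/
def Vertex := Quotient M.vSetoid
/-- Edges are orbits of `σ`. -/
def Edge := Quotient M.eSetoid
/-- Faces are orbits of `φ`. -/
def Face := Quotient M.fSetoid

instance : Finite M.Vertex := Quotient.finite _
instance : Finite M.Edge := Quotient.finite _
instance : Finite M.Face := Quotient.finite _

def vtx (d : M.D) : M.Vertex := Quotient.mk M.vSetoid d
def edg (d : M.D) : M.Edge := Quotient.mk M.eSetoid d
def fce (d : M.D) : M.Face := Quotient.mk M.fSetoid d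

noncomputable def nV : ℕ := Nat.card M.Vertex
noncomputable def nE : ℕ := Nat.card M.Edge
noncomputable def nF : ℕ := Nat.card M.Face

/-- The size of a face: the length of its facial walk, i.e. the number of darts in it. -/
noncomputable def faceSize (f : M.Face) : ℕ := Nat.card {d : M.D // M.fce d = f}

/-- The degree of a vertex: the number of darts emanating from it. -/
noncomputable def degree (v : M.Vertex) : ℕ := Nat.card {d : M.D // M.vtx d = v}

/-- The face excess `Σ_f (d(f) - 3)`. -/
noncomputable def faceExcess : ℤ := ∑ᶠ f : M.Face, ((M.faceSize f : ℤ) - 3)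

/-- The underlying graph of the map is simple: no loops, no multiple edges. -/
def Simple : Prop :=
  (∀ d, M.vtx d ≠ M.vtx (M.σ d)) ∧
  ∀ d d', M.vtx d = M.vtx d' → M.vtx (M.σ d) = M.vtx (M.σ d') → M.edg d = M.edg d'

/-- The dual has no loops. -/
def DualLoopFree : Prop := ∀ d, M.fce d ≠ M.fce (M.σ d)

/-- The dual is simple: no loops and no multiple edges. -/
def DualSimple : Prop :=
  M.DualLoopFree ∧
  ∀ d d', M.fce d = M.fce d' → M.fce (M.σ d) = M.fce (M.σ d') → M.edg d = M.edg d'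

/-- The underlying simple graph on the vertices of the map. -/
def graph : SimpleGraph M.Vertex :=
  SimpleGraph.fromRel (fun a b => ∃ d, M.vtx d = a ∧ M.vtx (M.σ d) = b)

/-- The underlying simple graph of the dual map, on the faces of the map. -/
def dualGraph : SimpleGraph M.Face :=
  SimpleGraph.fromRel (fun a b => ∃ d, M.fce d = a ∧ M.fce (M.σ d) = b)

/-- Vertex `v` lies on the face `f`. -/
def VertexOnFace (v : M.Vertex) (f : M.Face) : Prop := ∃ d, M.fce d = f ∧ M.vtx d = v

/-- Faces `f` and `f'` share an edge. -/
def FaceAdj (f f' : M.Face) : Prop := ∃ d, M.fce d = f ∧ M.fce (M.σ d) = f'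

end CombMap

/-- `k`-connectivity of a graph: more than `k` vertices, and removing fewer than `k`
vertices never disconnects it. -/
def KConn {α : Type} (H : SimpleGraph α) (k : ℕ) : Prop :=
  k < Nat.card α ∧ ∀ S : Set α, S.ncard < k → (H.induce Sᶜ).Connected

namespace CombMap

variable (M : CombMap)

/-- An empty `k`-circuit: a map on at most `k` vertices with a spanning face `f_e` of
size `k`, whose underlying graph is simple, whose dual has no loops, and all of whose
dual multi-edges are incident with `f_e`. -/
def IsEmptyCircuit (k : ℕ) (fe : M.Face) : Prop :=
  M.nV ≤ k ∧ M.faceSize fe = k ∧ (∀ v : M.Vertex, M.VertexOnFace v fe) ∧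
  M.Simple ∧ M.DualLoopFree ∧
  ∀ d d', M.fce d = M.fce d' → M.fce (M.σ d) = M.fce (M.σ d') → M.edg d ≠ M.edg d' →
    (M.fce d = fe ∨ M.fce (M.σ d) = fe)

/-- An empty `k`-pair: a map on at most `k` vertices with two spanning faces
`f_e, f_e'` with `d(f_e)+d(f_e') = k` not sharing an edge, whose underlying graph is
simple, whose dual has no loops, and all of whose dual multi-edges are incident with
`f_e` or `f_e'`. -/
def IsEmptyPair (k : ℕ) (fe fe' : M.Face) : Prop :=
  M.nV ≤ k ∧ fe ≠ fe' ∧ M.faceSize fe + M.faceSize fe' = k ∧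
  (∀ v : M.Vertex, M.VertexOnFace v fe ∨ M.VertexOnFace v fe') ∧
  ¬ M.FaceAdj fe fe' ∧
  M.Simple ∧ M.DualLoopFree ∧
  ∀ d d', M.fce d = M.fce d' → M.fce (M.σ d) = M.fce (M.σ d') → M.edg d ≠ M.edg d' →
    (M.fce d = fe ∨ M.fce d = fe' ∨ M.fce (M.σ d) = fe ∨ M.fce (M.σ d) = fe')

end CombMap

namespace CombMap

open Finset

variable (M : CombMap)

lemma sigma_mul_self : M.σ * M.σ = 1 := by
  ext d; simp [Equiv.Perm.mul_apply, M.σ_invol]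

lemma sigma_inv : M.σ⁻¹ = M.σ :=
  inv_eq_of_mul_eq_one_right M.sigma_mul_self

lemma sigma_pow (n : ℕ) : M.σ ^ n = 1 ∨ M.σ ^ n = M.σ := by
  induction n with
  | zero => left; rfl
  | succ m ih =>
    rcases ih with h | h
    · right; rw [pow_succ, h, one_mul]
    · left; rw [pow_succ, h, sigma_mul_self]

lemma sigma_zpow (n : ℤ) : M.σ ^ n = 1 ∨ M.σ ^ n = M.σ := by
  induction n using Int.rec with
  | ofNat m => rw [Int.ofNat_eq_coe, zpow_natCast]; exact M.sigma_pow m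
  | negSucc m =>
    rw [zpow_negSucc]
    rcases M.sigma_pow (m + 1) with h | h <;> rw [h] <;> simp [M.sigma_inv]

lemma edg_sigma (d : M.D) : M.edg (M.σ d) = M.edg d :=
  (Quotient.sound (⟨1, by simp⟩ : M.σ.SameCycle d (M.σ d))).symm

lemma vtx_rho (d : M.D) : M.vtx (M.ρ d) = M.vtx d :=
  (Quotient.sound (⟨1, by simp⟩ : M.ρ.SameCycle d (M.ρ d))).symm

lemma fce_phi (d : M.D) : M.fce (M.φ d) = M.fce d :=
  (Quotient.sound (⟨1, by simp⟩ : M.φ.SameCycle d (M.φ d))).symm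

lemma phi_apply (d : M.D) : M.φ d = M.ρ (M.σ d) := rfl

lemma vtx_phi (d : M.D) : M.vtx (M.φ d) = M.vtx (M.σ d) := by
  rw [phi_apply, vtx_rho]

lemma edg_eq_iff {d d' : M.D} : M.edg d = M.edg d' ↔ d' = d ∨ d' = M.σ d := by
  constructor
  · intro h
    obtain ⟨n, hn⟩ : M.σ.SameCycle d d' := Quotient.exact h
    rcases M.sigma_zpow n with h1 | h1 <;> rw [h1] at hn
    · left; exact hn.symm
    · right; exact hn.symm
  · rintro (rfl | rfl)
    · rfl
    · exact (M.edg_sigma d).symm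

/-- The pair of endpoints of (the edge of) a dart. -/
def pr (d : M.D) : Sym2 M.Vertex := s(M.vtx d, M.vtx (M.σ d))

lemma pr_not_diag (hs : M.Simple) (d : M.D) : ¬ (M.pr d).IsDiag := by
  rw [pr, Sym2.mk_isDiag_iff]
  exact hs.1 d

lemma edg_of_pr (hs : M.Simple) {d d' : M.D} (h : M.pr d = M.pr d') :
    M.edg d = M.edg d' := by
  rw [pr, pr, Sym2.eq_iff] at h
  rcases h with ⟨h1, h2⟩ | ⟨h1, h2⟩
  · exact hs.2 d d' h1 h2
  · have := hs.2 d (M.σ d') h1 (by rw [M.σ_invol]; exact h2)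
    rwa [M.edg_sigma] at this

lemma dart_of_pr (hs : M.Simple) {d d' : M.D} (h : M.pr d = M.pr d') :
    d' = d ∨ d' = M.σ d :=
  M.edg_eq_iff.mp (M.edg_of_pr hs h)

lemma phi_ne (hs : M.Simple) (d : M.D) : M.φ d ≠ d := by
  intro h
  have h2 : M.vtx (M.σ d) = M.vtx d := by
    rw [← M.vtx_rho (M.σ d), ← phi_apply, h]
  exact hs.1 d h2.symm

lemma phi_phi_ne (hs : M.Simple) (hdl : M.DualLoopFree) (d : M.D) :
    M.φ (M.φ d) ≠ d := by
  intro h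
  have e1 : M.vtx (M.φ d) = M.vtx (M.σ d) := M.vtx_phi d
  have e2 : M.vtx (M.σ (M.φ d)) = M.vtx d := by
    rw [← M.vtx_phi (M.φ d), h]
  have hpp : M.pr (M.φ d) = M.pr d := by
    rw [pr, pr, e1, e2, Sym2.eq_swap]
  rcases M.dart_of_pr hs hpp.symm with h2 | h2
  · exact M.phi_ne hs d h2
  · exact hdl d (by rw [← h2, M.fce_phi] : M.fce (M.σ d) = M.fce d).symm

end CombMap

theorem no_small_empty_circuit_with_nonneighbour_face
    (M : CombMap) (k : ℕ) (hk : k ∈ ({3, 4, 5} : Set ℕ)) (fe f : M.Face)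
    (hcirc : M.IsEmptyCircuit k fe)
    (hne : f ≠ fe) (hnadj : ¬ M.FaceAdj fe f) :
    False := by
  classical
  obtain ⟨hnV, hsize, hall, hs, hdl, hmult⟩ := hcirc
  letI : Fintype M.D := Fintype.ofFinite _
  letI : Fintype M.Vertex := Fintype.ofFinite _
  -- the dart sets of the two faces
  set Fe : Finset M.D := Finset.univ.filter (fun d => M.fce d = fe) with hFeDef
  set Ff : Finset M.D := Finset.univ.filter (fun d => M.fce d = f) with hFfDef
  have memFe : ∀ x, x ∈ Fe ↔ M.fce x = fe := fun x => by simp [hFeDef]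
  have memFf : ∀ x, x ∈ Ff ↔ M.fce x = f := fun x => by simp [hFfDef]
  have cardFace : ∀ g : M.Face,
      (Finset.univ.filter (fun d => M.fce d = g)).card = M.faceSize g := by
    intro g
    rw [CombMap.faceSize, Nat.card_eq_fintype_card, Fintype.card_subtype]
  have hFe : Fe.card = k := by rw [hFeDef, cardFace, hsize]
  set m := Ff.card with hm
  have hmsize : m = M.faceSize f := by rw [hm, hFfDef, cardFace]
  -- f is nonempty; the triple
  obtain ⟨df, hdf⟩ := Quot.exists_rep f
  have hdff : M.fce df = f := hdf
  have triple : ∀ d : M.D, M.φ d ≠ d ∧ M.φ (M.φ d) ≠ d ∧ M.φ (M.φ d) ≠ M.φ d :=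
    fun d => ⟨M.phi_ne hs d, M.phi_phi_ne hs hdl d, M.phi_ne hs (M.φ d)⟩
  have tripleCard : ∀ d : M.D, ({d, M.φ d, M.φ (M.φ d)} : Finset M.D).card = 3 := by
    intro d
    rw [Finset.card_insert_of_notMem (by simp [(triple d).1, (triple d).2.1, Ne.symm]),
      Finset.card_insert_of_notMem (by simp [(triple d).2.2, Ne.symm]),
      Finset.card_singleton]
  have tripleSub : ∀ (g : M.Face) (d : M.D), M.fce d = g →
      ({d, M.φ d, M.φ (M.φ d)} : Finset M.D) ⊆
        Finset.univ.filter (fun x => M.fce x = g) := by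
    intro g d hd x hx
    simp only [Finset.mem_insert, Finset.mem_singleton] at hx
    rcases hx with rfl | rfl | rfl <;>
      simp [Finset.mem_filter, M.fce_phi, hd]
  have hm3 : 3 ≤ m := by
    rw [hm]
    calc 3 = ({df, M.φ df, M.φ (M.φ df)} : Finset M.D).card := (tripleCard df).symm
    _ ≤ Ff.card := Finset.card_le_card (by rw [hFfDef]; exact tripleSub f df hdff)
  -- injectivity of pr on each face
  have prInj : ∀ (g : M.Face) (d d' : M.D), M.fce d = g → M.fce d' = g →
      M.pr d = M.pr d' → d = d' := by
    intro g d d' hd hd' h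
    rcases M.dart_of_pr hs h with rfl | rfl
    · rfl
    · exact absurd (hd.trans hd'.symm) (hdl d)
  -- images under pr of Fe and Ff are disjoint
  have hdisj : Disjoint (Fe.image M.pr) (Ff.image M.pr) := by
    rw [Finset.disjoint_left]
    rintro p hp hq
    obtain ⟨d, hd, rfl⟩ := Finset.mem_image.mp hp
    obtain ⟨d', hd', hdd⟩ := Finset.mem_image.mp hq
    rw [memFe] at hd; rw [memFf] at hd'
    rcases M.dart_of_pr hs hdd.symm with rfl | rfl
    · exact hne (hd'.symm.trans hd)
    · exact hnadj ⟨d, hd, hd'⟩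
  -- all pairs are non-diagonal
  have hPcard : (Finset.univ.filter (fun p : Sym2 M.Vertex => ¬ p.IsDiag)).card
      = (Fintype.card M.Vertex).choose 2 := by
    rw [← Sym2.card_subtype_not_diag, Fintype.card_subtype]
  have himg : ∀ g : M.Face, (Finset.univ.filter (fun d => M.fce d = g)).image M.pr ⊆
      Finset.univ.filter (fun p : Sym2 M.Vertex => ¬ p.IsDiag) := by
    intro g p hp
    obtain ⟨d, _, rfl⟩ := Finset.mem_image.mp hp
    simp [M.pr_not_diag hs]
  have hV5 : Fintype.card M.Vertex ≤ k := by
    rw [← Nat.card_eq_fintype_card]; exact hnV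
  have hkm : k + m ≤ k.choose 2 := by
    have h1 : (Fe.image M.pr).card = k := by
      rw [Finset.card_image_of_injOn, hFe]
      intro d hd d' hd' h
      exact prInj fe d d' ((memFe d).mp hd) ((memFe d').mp hd') h
    have h2 : (Ff.image M.pr).card = m := by
      rw [Finset.card_image_of_injOn]
      intro d hd d' hd' h
      exact prInj f d d' ((memFf d).mp hd) ((memFf d').mp hd') h
    calc k + m = (Fe.image M.pr ∪ Ff.image M.pr).card := by
          rw [Finset.card_union_of_disjoint hdisj, h1, h2]
    _ ≤ (Finset.univ.filter (fun p : Sym2 M.Vertex => ¬ p.IsDiag)).card := by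
          apply Finset.card_le_card
          apply Finset.union_subset
          · rw [hFeDef]; exact himg fe
          · rw [hFfDef]; exact himg f
    _ = (Fintype.card M.Vertex).choose 2 := hPcard
    _ ≤ k.choose 2 := Nat.choose_le_choose 2 hV5
  simp only [Set.mem_insert_iff, Set.mem_singleton_iff] at hk
  rcases hk with rfl | rfl | rfl
  · -- k = 3
    have : (3:ℕ).choose 2 = 3 := by norm_num [Nat.choose]
    omega
  · have : (4:ℕ).choose 2 = 6 := by norm_num [Nat.choose]
    omega
  -- k = 5 from now on
  have hchoose : (5:ℕ).choose 2 = 10 := by norm_num [Nat.choose]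
  -- total number of darts is at most 20
  have hD20 : Fintype.card M.D ≤ 20 := by
    have hfib : ∀ b ∈ Finset.univ.filter (fun p : Sym2 M.Vertex => ¬ p.IsDiag),
        (Finset.univ.filter (fun a => M.pr a = b)).card ≤ 2 := by
      intro b _
      by_cases hne' : (Finset.univ.filter (fun a => M.pr a = b)).Nonempty
      · obtain ⟨d0, hd0⟩ := hne'
        simp only [Finset.mem_filter, Finset.mem_univ, true_and] at hd0
        have hsub : (Finset.univ.filter (fun a => M.pr a = b)) ⊆ {d0, M.σ d0} := by
          intro x hx
          simp only [Finset.mem_filter, Finset.mem_univ, true_and] at hx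
          simp only [Finset.mem_insert, Finset.mem_singleton]
          exact M.dart_of_pr hs (hd0.trans hx.symm)
        calc (Finset.univ.filter (fun a => M.pr a = b)).card
            ≤ ({d0, M.σ d0} : Finset M.D).card := Finset.card_le_card hsub
        _ ≤ 2 := Finset.card_insert_le _ _ |>.trans (by simp)
      · rw [Finset.not_nonempty_iff_eq_empty.mp hne']; simp
    have := Finset.card_le_mul_card_image_of_maps_to
      (f := M.pr) (s := Finset.univ)
      (t := Finset.univ.filter (fun p : Sym2 M.Vertex => ¬ p.IsDiag))
      (fun d _ => by simp [M.pr_not_diag hs]) 2 hfib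
    rw [Finset.card_univ, hPcard] at this
    have h10 : (Fintype.card M.Vertex).choose 2 ≤ 10 :=
      hchoose ▸ Nat.choose_le_choose 2 hV5
    omega
  -- the faces on the other side of the darts of f are pairwise distinct,
  -- and distinct from fe and f
  have gne : ∀ d, M.fce d = f → M.fce (M.σ d) ≠ fe ∧ M.fce (M.σ d) ≠ f := by
    intro d hd
    constructor
    · intro h
      exact hnadj ⟨M.σ d, h, by rw [M.σ_invol]; exact hd⟩
    · intro h
      exact hdl d (hd.trans h.symm)
  have ginj : ∀ d d', M.fce d = f → M.fce d' = f →
      M.fce (M.σ d) = M.fce (M.σ d') → d = d' := by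
    intro d d' hd hd' h
    by_cases he : M.edg d = M.edg d'
    · rcases M.edg_eq_iff.mp he with rfl | rfl
      · rfl
      · exact absurd (hd.trans hd'.symm) (hdl d)
    · rcases hmult d d' (hd.trans hd'.symm) h he with h1 | h1
      · exact absurd (h1.symm.trans hd) hne.symm
      · exact absurd ((gne d hd).1 h1) (fun hh => hh)
  -- the finset of darts in the faces adjacent to f
  set T : M.D → Finset M.D := fun d => {M.σ d, M.φ (M.σ d), M.φ (M.φ (M.σ d))}
    with hTdef
  have hTface : ∀ d x, x ∈ T d → M.fce x = M.fce (M.σ d) := by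
    intro d x hx
    simp only [hTdef, Finset.mem_insert, Finset.mem_singleton] at hx
    rcases hx with rfl | rfl | rfl
    · rfl
    · exact M.fce_phi _
    · rw [M.fce_phi, M.fce_phi]
  have hGdisj : ∀ d ∈ Ff, ∀ d' ∈ Ff, d ≠ d' → Disjoint (T d) (T d') := by
    intro d hd d' hd' hdd'
    rw [Finset.disjoint_left]
    intro x hx hx'
    exact hdd' (ginj d d' ((memFf d).mp hd) ((memFf d').mp hd')
      ((hTface d x hx).symm.trans (hTface d' x hx')))
  set G : Finset M.D := Ff.biUnion T with hGdef
  have hGcard : G.card = 3 * m := by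
    rw [hGdef, Finset.card_biUnion hGdisj]
    have : ∀ d, (T d).card = 3 := fun d => tripleCard (M.σ d)
    rw [Finset.sum_congr rfl (fun d _ => this d), Finset.sum_const, smul_eq_mul,
      mul_comm]
  have hGFe : Disjoint G Fe := by
    rw [Finset.disjoint_left]
    intro x hx hx'
    obtain ⟨d, hd, hxd⟩ := Finset.mem_biUnion.mp hx
    exact (gne d ((memFf d).mp hd)).1 ((hTface d x hxd).symm.trans ((memFe x).mp hx'))
  have hGFf : Disjoint G Ff := by
    rw [Finset.disjoint_left]
    intro x hx hx'
    obtain ⟨d, hd, hxd⟩ := Finset.mem_biUnion.mp hx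
    exact (gne d ((memFf d).mp hd)).2 ((hTface d x hxd).symm.trans ((memFf x).mp hx'))
  have hFeFf : Disjoint Fe Ff := by
    rw [Finset.disjoint_left]
    intro x hx hx'
    exact hne (((memFf x).mp hx').symm.trans ((memFe x).mp hx))
  have hcount : 3 * m + (5 + m) ≤ Fintype.card M.D := by
    calc 3 * m + (5 + m) = G.card + (Fe.card + Ff.card) := by rw [hGcard, hFe, hm]
    _ = G.card + (Fe ∪ Ff).card := by rw [Finset.card_union_of_disjoint hFeFf]
    _ = (G ∪ (Fe ∪ Ff)).card := by
        rw [Finset.card_union_of_disjoint (Finset.disjoint_union_right.mpr ⟨hGFe, hGFf⟩)]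
    _ ≤ (Finset.univ : Finset M.D).card := Finset.card_le_card (Finset.subset_univ _)
    _ = Fintype.card M.D := Finset.card_univ
  have hmeq : m = 3 := by omega
  -- the face f is a triangle d0 → d1 → d2 → d0
  set d1 : M.D := M.φ df with hd1def
  set d2 : M.D := M.φ (M.φ df) with hd2def
  have hFf3 : Ff = {df, d1, d2} := by
    refine (Finset.eq_of_subset_of_card_le ?_ ?_).symm
    · rw [hFfDef]; exact tripleSub f df hdff
    · rw [← hm, hmeq, tripleCard df]
  have hd1f : M.fce d1 = f := by rw [hd1def, M.fce_phi, hdff]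
  have hd2f : M.fce d2 = f := by rw [hd2def, M.fce_phi, M.fce_phi, hdff]
  have hphi3 : M.φ d2 = df := by
    have hmem : M.φ d2 ∈ Ff := by rw [memFf, M.fce_phi, hd2f]
    rw [hFf3] at hmem
    simp only [Finset.mem_insert, Finset.mem_singleton] at hmem
    rcases hmem with h | h | h
    · exact h
    · exact absurd (M.φ.injective (h.trans rfl) : d2 = df) (triple df).2.1
    · exact absurd h (triple d2).1
  set u : M.Vertex := M.vtx df with hudef
  set v : M.Vertex := M.vtx (M.σ df) with hvdef
  set w : M.Vertex := M.vtx (M.σ d1) with hwdef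
  have hvtx1 : M.vtx d1 = v := M.vtx_phi df
  have hvtx2 : M.vtx d2 = w := M.vtx_phi d1
  have hvtx0 : M.vtx (M.σ d2) = u := by
    rw [← M.vtx_phi d2, hphi3]
  have hpr0 : M.pr df = s(u, v) := rfl
  have hpr1 : M.pr d1 = s(v, w) := by rw [CombMap.pr, hvtx1]
  have hpr2 : M.pr d2 = s(w, u) := by rw [CombMap.pr, hvtx2, hvtx0]
  have huv : u ≠ v := hs.1 df
  have hvw : v ≠ w := by rw [← hvtx1]; exact hs.1 d1
  have hwu : w ≠ u := by rw [← hvtx2, ← hvtx0]; exact hs.1 d2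
  -- membership facts
  have hprFf : ∀ d, M.fce d = f → M.pr d ∈ Ff.image M.pr := by
    intro d hd
    exact Finset.mem_image_of_mem _ ((memFf d).mpr hd)
  have hnotin : ∀ z : Sym2 M.Vertex, z ∈ Fe.image M.pr → z ∉ Ff.image M.pr :=
    fun z hz hz' => Finset.disjoint_left.mp hdisj hz hz'
  -- every vertex has two distinct fe-neighbours
  have vert2 : ∀ x : M.Vertex, ∃ a b : M.Vertex, a ≠ b ∧ x ≠ a ∧ x ≠ b ∧
      s(x, a) ∈ Fe.image M.pr ∧ s(x, b) ∈ Fe.image M.pr := by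
    intro x
    obtain ⟨e, he, hx⟩ := hall x
    set e' : M.D := M.φ.symm e with he'def
    have hphie' : M.φ e' = e := M.φ.apply_symm_apply e
    have hfe' : M.fce e' = fe := by rw [← he, ← hphie', M.fce_phi]
    have hve' : M.vtx (M.σ e') = x := by rw [← M.vtx_phi e', hphie', hx]
    refine ⟨M.vtx (M.σ e), M.vtx e', ?_, ?_, ?_, ?_, ?_⟩
    · intro hab
      have hpp : M.pr e = M.pr e' := by
        rw [CombMap.pr, CombMap.pr, hx, hve', hab, Sym2.eq_swap]
      rcases M.dart_of_pr hs hpp with h1 | h1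
      · exact M.phi_ne hs e' (hphie'.trans h1.symm)
      · exact hdl e (he.trans (h1 ▸ hfe' : M.fce (M.σ e) = fe).symm)
    · rw [← hx]; exact hs.1 e
    · intro hb
      exact hs.1 e' (hb.symm.trans hve'.symm)
    · refine Finset.mem_image.mpr ⟨e, (memFe e).mpr he, ?_⟩
      rw [CombMap.pr, hx]
    · refine Finset.mem_image.mpr ⟨e', (memFe e').mpr hfe', ?_⟩
      rw [CombMap.pr, hve', Sym2.eq_swap]
  -- apply to u: get the remaining two vertices p, q
  obtain ⟨p, q, hpq, hup, huq, hsup, hsuq⟩ := vert2 u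
  have hpv : p ≠ v := by
    intro h
    exact hnotin _ hsup (h ▸ hpr0 ▸ hprFf df hdff)
  have hpw : p ≠ w := by
    intro h
    refine hnotin _ hsup ?_
    rw [h, Sym2.eq_swap, ← hpr2]
    exact hprFf d2 hd2f
  have hqv : q ≠ v := by
    intro h
    exact hnotin _ hsuq (h ▸ hpr0 ▸ hprFf df hdff)
  have hqw : q ≠ w := by
    intro h
    refine hnotin _ hsuq ?_
    rw [h, Sym2.eq_swap, ← hpr2]
    exact hprFf d2 hd2f
  -- so there are exactly 5 vertices
  have hcard5 : ({u, v, w, p, q} : Finset M.Vertex).card = 5 := by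
    rw [Finset.card_insert_of_notMem (by simp [huv, hwu.symm, hup, huq]),
      Finset.card_insert_of_notMem (by simp [hvw, hpv.symm, hqv.symm]),
      Finset.card_insert_of_notMem (by simp [hpw.symm, hqw.symm]),
      Finset.card_insert_of_notMem (by simp [hpq]),
      Finset.card_singleton]
  have hVeq : Fintype.card M.Vertex = 5 :=
    le_antisymm hV5 (hcard5 ▸ Finset.card_le_univ _)
  have huniv : ({u, v, w, p, q} : Finset M.Vertex) = Finset.univ :=
    Finset.eq_univ_of_card _ (hcard5.trans hVeq.symm)
  have hmemPQ : ∀ y : M.Vertex, y ≠ u → y ≠ v → y ≠ w → y = p ∨ y = q := by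
    intro y hyu hyv hyw
    have : y ∈ ({u, v, w, p, q} : Finset M.Vertex) := huniv ▸ Finset.mem_univ y
    simp only [Finset.mem_insert, Finset.mem_singleton] at this
    tauto
  -- the two fe-neighbours of v are p and q
  have hv2 : s(v, p) ∈ Fe.image M.pr ∧ s(v, q) ∈ Fe.image M.pr := by
    obtain ⟨a, b, hab, hva, hvb, ha, hb⟩ := vert2 v
    have hau : a ≠ u := by
      intro h; refine hnotin _ ha ?_
      rw [h, Sym2.eq_swap, ← hpr0]; exact hprFf df hdff
    have haw : a ≠ w := by
      intro h; refine hnotin _ ha ?_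
      rw [h, ← hpr1]; exact hprFf d1 hd1f
    have hbu : b ≠ u := by
      intro h; refine hnotin _ hb ?_
      rw [h, Sym2.eq_swap, ← hpr0]; exact hprFf df hdff
    have hbw : b ≠ w := by
      intro h; refine hnotin _ hb ?_
      rw [h, ← hpr1]; exact hprFf d1 hd1f
    rcases hmemPQ a hau hva.symm haw with h1 | h1 <;>
      rcases hmemPQ b hbu hvb.symm hbw with h2 | h2
    · exact absurd (h1.trans h2.symm) hab
    · exact ⟨h1 ▸ ha, h2 ▸ hb⟩
    · exact ⟨h2 ▸ hb, h1 ▸ ha⟩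
    · exact absurd (h1.trans h2.symm) hab
  -- the two fe-neighbours of w are p and q
  have hw2 : s(w, p) ∈ Fe.image M.pr ∧ s(w, q) ∈ Fe.image M.pr := by
    obtain ⟨a, b, hab, hwa, hwb, ha, hb⟩ := vert2 w
    have hau : a ≠ u := by
      intro h; refine hnotin _ ha ?_
      rw [h, ← hpr2]; exact hprFf d2 hd2f
    have hav : a ≠ v := by
      intro h; refine hnotin _ ha ?_
      rw [h, Sym2.eq_swap, ← hpr1]; exact hprFf d1 hd1f
    have hbu : b ≠ u := by
      intro h; refine hnotin _ hb ?_
      rw [h, ← hpr2]; exact hprFf d2 hd2f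
    have hbv : b ≠ v := by
      intro h; refine hnotin _ hb ?_
      rw [h, Sym2.eq_swap, ← hpr1]; exact hprFf d1 hd1f
    rcases hmemPQ a hau hav hwa.symm with h1 | h1 <;>
      rcases hmemPQ b hbu hbv hwb.symm with h2 | h2
    · exact absurd (h1.trans h2.symm) hab
    · exact ⟨h1 ▸ ha, h2 ▸ hb⟩
    · exact ⟨h2 ▸ hb, h1 ▸ ha⟩
    · exact absurd (h1.trans h2.symm) hab
  -- but fe only has 5 darts, while we found 6 distinct fe-pairs
  have hFeImgCard : (Fe.image M.pr).card = 5 := by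
    rw [Finset.card_image_of_injOn, hFe]
    intro d hd d' hd' h
    exact prInj fe d d' ((memFe d).mp hd) ((memFe d').mp hd') h
  have hprod : (({u, v, w} : Finset M.Vertex) ×ˢ ({p, q} : Finset M.Vertex)).card
      = 6 := by
    rw [Finset.card_product,
      Finset.card_insert_of_notMem (by simp [huv, hwu.symm]),
      Finset.card_insert_of_notMem (by simp [hvw]), Finset.card_singleton,
      Finset.card_insert_of_notMem (by simp [hpq]), Finset.card_singleton]
  have hle : (({u, v, w} : Finset M.Vertex) ×ˢ ({p, q} : Finset M.Vertex)).card
      ≤ (Fe.image M.pr).card := by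
    apply Finset.card_le_card_of_injOn (fun z => s(z.1, z.2))
    · rintro ⟨x, y⟩ hxy
      rw [Finset.mem_coe, Finset.mem_product] at hxy
      obtain ⟨hx, hy⟩ := hxy
      simp only [Finset.mem_insert, Finset.mem_singleton] at hx hy
      rcases hx with rfl | rfl | rfl <;> rcases hy with rfl | rfl
      · exact hsup
      · exact hsuq
      · exact hv2.1
      · exact hv2.2
      · exact hw2.1
      · exact hw2.2
    · rintro ⟨x, y⟩ hxy ⟨x', y'⟩ hxy' h
      simp only [Finset.coe_product, Set.mem_prod, Finset.coe_insert,
        Set.mem_insert_iff, Finset.coe_singleton, Set.mem_singleton_iff] at hxy hxy'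
      rw [Sym2.eq_iff] at h
      rcases h with ⟨rfl, rfl⟩ | ⟨h1, h2⟩
      · rfl
      · exfalso
        rcases hxy.1 with rfl | rfl | rfl <;> rcases hxy'.2 with rfl | rfl
        · exact hup h1
        · exact huq h1
        · exact hpv h1.symm
        · exact hqv h1.symm
        · exact hpw h1.symm
        · exact hqw h1.symm
  omega
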